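/- Let G=(V,E) be a finite connected graph with positive vertex measure μ and positive symmetric edge weights w. Let f:ℝ→ℝ satisfy f(t)=a e^t+g(t)e^t with a>0 a constant, g uniformly bounded on ℝ, g(t)→0 as t→±∞, and f(t)>0 for all t. Fix A>0. Then there exists a constant C=C(A,G,f)≥0 such that for every h:V→ℝ and c∈ℝ satisfying (1) max_V(|h|+|c|)≤A, (2) h(x)>0 for some x∈V implies h(x)≥A^{−1}, (3) c>0 implies c≥A^{−1}, (4) c=0 implies ∫_V h dμ ≤ −A^{−1}, (5) c<0 implies c≤−A^{−1} and min_V h ≤ −A^{−1}, every solution u:V→ℝ of −Δu = h(x) f(u) − c satisfies max_{x∈V}|u(x)| ≤ C. -/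

import Mathlib

open Finset

lemma walk_key {V : Type*} [Fintype V] (G : SimpleGraph V) [DecidableRel G.Adj]
    (w : V → V → ℝ) (u : V → ℝ) (W1 w0 ρ : ℝ) (hw0 : 0 < w0)
    (hwlb : ∀ x y, G.Adj x y → w0 ≤ w x y) (hwpos : ∀ x y, G.Adj x y → 0 < w x y)
    (hW1 : ∀ x, ∑ y ∈ G.neighborFinset x, w x y ≤ W1) (hW1nn : 0 ≤ W1)
    (hρ : ρ = (1 + W1) / w0 + 1)
    (m : ℝ) (hm : ∀ v, u v ≤ m)
    (Ω : Set V) (β : ℝ) (hβ : 0 ≤ β)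
    (hΩ : ∀ x ∈ Ω, ∑ y ∈ G.neighborFinset x, w x y * (u x - u y) ≤ β) :
    ∀ {x z : V} (p : G.Walk x z) (D : ℝ), 0 ≤ D → m - D ≤ u x →
      ∃ v ∈ p.support, (v ∉ Ω ∨ v = z) ∧ m - ((D + β) * ρ ^ p.length - β) ≤ u v := by
  have hρ1 : (1:ℝ) ≤ ρ := by
    rw [hρ]
    have : 0 ≤ (1 + W1) / w0 := by positivity
    linarith
  classical
  intro x z p
  induction p with
  | nil =>
    intro D hD hx
    exact ⟨_, by simp, Or.inr rfl, by simpa using hx⟩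
  | @cons x' y' z' hadj p ih =>
    intro D hD hx
    by_cases hxΩ : x' ∈ Ω
    · have hymem : y' ∈ G.neighborFinset x' := by
        rw [SimpleGraph.mem_neighborFinset]; exact hadj
      have hsum := hΩ x' hxΩ
      set s := (G.neighborFinset x').erase y' with hs
      have hadjs : ∀ y'' ∈ s, G.Adj x' y'' := by
        intro y'' hy''
        have := Finset.mem_of_mem_erase hy''
        rwa [SimpleGraph.mem_neighborFinset] at this
      have hlow : ∀ y'' ∈ s, -(w x' y'' * D) ≤ w x' y'' * (u x' - u y'') := by
        intro y'' hy''
        have hwp := hwpos x' y'' (hadjs y'' hy'')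
        have h1 : -D ≤ u x' - u y'' := by have := hm y''; linarith
        nlinarith
      have hsplit : (∑ y'' ∈ s, w x' y'' * (u x' - u y''))
          + w x' y' * (u x' - u y') = ∑ y'' ∈ G.neighborFinset x', w x' y'' * (u x' - u y'') :=
        Finset.sum_erase_add _ _ hymem
      have hsnn : 0 ≤ ∑ y'' ∈ s, w x' y'' := by
        apply Finset.sum_nonneg
        intro y'' hy''
        exact (hwpos x' y'' (hadjs y'' hy'')).le
      have herasew : ∑ y'' ∈ s, w x' y'' ≤ W1 := by
        have h1 : (∑ y'' ∈ s, w x' y'') + w x' y' = ∑ y'' ∈ G.neighborFinset x', w x' y'' :=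
          Finset.sum_erase_add _ _ hymem
        have := hW1 x'
        have := hwpos x' y' hadj
        linarith
      have h1 : ∑ y'' ∈ s, -(w x' y'' * D) ≤ ∑ y'' ∈ s, w x' y'' * (u x' - u y'') :=
        Finset.sum_le_sum hlow
      have h2 : ∑ y'' ∈ s, -(w x' y'' * D) = -((∑ y'' ∈ s, w x' y'') * D) := by
        rw [Finset.sum_neg_distrib, ← Finset.sum_mul]
      have hkey1 : w x' y' * (u x' - u y') ≤ β + W1 * D := by
        rw [h2] at h1
        nlinarith
      have hstep : u x' - u y' ≤ (β + W1 * D) / w0 := by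
        rcases le_or_gt (u x' - u y') 0 with hc | hc
        · have : 0 ≤ (β + W1 * D) / w0 := by positivity
          linarith
        · rw [le_div_iff₀ hw0]
          have hwl := hwlb x' y' hadj
          nlinarith
      set D' := D + (β + W1 * D) / w0 with hD'def
      have hD' : 0 ≤ D' := by positivity
      have hy : m - D' ≤ u y' := by
        simp only [hD'def]
        linarith
      obtain ⟨v, hvmem, hvd, hvb⟩ := ih D' hD' hy
      refine ⟨v, ?_, hvd, ?_⟩
      · rw [SimpleGraph.Walk.support_cons]
        exact List.mem_cons_of_mem _ hvmem
      · have hkey : D' + β ≤ (D + β) * ρ := by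
          rw [hρ, hD'def]
          have hnum : β + W1 * D ≤ (D + β) * (1 + W1) := by nlinarith
          have hdiv : (β + W1 * D) / w0 ≤ ((D + β) * (1 + W1)) / w0 :=
            (div_le_div_iff_of_pos_right hw0).mpr hnum
          have heq : (D + β) * ((1 + W1) / w0 + 1) = ((D + β) * (1 + W1)) / w0 + (D + β) := by
            ring
          rw [heq]
          linarith
        have hplen : (SimpleGraph.Walk.cons hadj p).length = p.length + 1 :=
          SimpleGraph.Walk.length_cons _ _
        rw [hplen]
        have hpow : (0:ℝ) ≤ ρ ^ p.length := by positivity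
        have : (D' + β) * ρ ^ p.length ≤ (D + β) * ρ ^ (p.length + 1) := by
          calc (D' + β) * ρ ^ p.length ≤ ((D + β) * ρ) * ρ ^ p.length :=
                mul_le_mul_of_nonneg_right hkey hpow
            _ = (D + β) * ρ ^ (p.length + 1) := by ring
        linarith
    · refine ⟨x', by simp, Or.inl hxΩ, ?_⟩
      have hp1 : (1:ℝ) ≤ ρ ^ (SimpleGraph.Walk.cons hadj p).length := one_le_pow₀ hρ1
      nlinarith

lemma reach_key {V : Type*} [Fintype V] (G : SimpleGraph V) [DecidableRel G.Adj]
    (hconn : G.Connected)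
    (w : V → V → ℝ) (u : V → ℝ) (W1 w0 ρ : ℝ) (hw0 : 0 < w0)
    (hwlb : ∀ x y, G.Adj x y → w0 ≤ w x y) (hwpos : ∀ x y, G.Adj x y → 0 < w x y)
    (hW1 : ∀ x, ∑ y ∈ G.neighborFinset x, w x y ≤ W1) (hW1nn : 0 ≤ W1)
    (hρ : ρ = (1 + W1) / w0 + 1)
    (m : ℝ) (hm : ∀ v, u v ≤ m)
    (Ω : Set V) (β : ℝ) (hβ : 0 ≤ β)
    (hΩ : ∀ x ∈ Ω, ∑ y ∈ G.neighborFinset x, w x y * (u x - u y) ≤ β)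
    (x z : V) (hx : m ≤ u x) :
    ∃ v : V, (v ∉ Ω ∨ v = z) ∧ m - β * ρ ^ (Fintype.card V) ≤ u v := by
  classical
  have hρ1 : (1:ℝ) ≤ ρ := by
    rw [hρ]
    have : 0 ≤ (1 + W1) / w0 := by positivity
    linarith
  obtain ⟨p0⟩ := hconn.preconnected x z
  set p := p0.bypass with hp
  have hlen : p.length < Fintype.card V := p0.bypass_isPath.length_lt
  obtain ⟨v, hvmem, hvd, hvb⟩ := walk_key G w u W1 w0 ρ hw0 hwlb hwpos hW1 hW1nn hρ m hm Ω β hβ hΩ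
    p 0 le_rfl (by simpa using hx)
  refine ⟨v, hvd, ?_⟩
  have h1 : ρ ^ p.length ≤ ρ ^ (Fintype.card V) := pow_le_pow_right₀ hρ1 hlen.le
  have h2 : (0 + β) * ρ ^ p.length - β ≤ β * ρ ^ (Fintype.card V) := by
    have : β * ρ ^ p.length ≤ β * ρ ^ (Fintype.card V) := mul_le_mul_of_nonneg_left h1 hβ
    nlinarith
  linarith

lemma sum_nbr_antisymm {V : Type*} [Fintype V] (G : SimpleGraph V) [DecidableRel G.Adj]
    (F : V → V → ℝ) (hF : ∀ x y, G.Adj x y → F x y = - F y x) :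
    ∑ x, ∑ y ∈ G.neighborFinset x, F x y = 0 := by
  classical
  have hrw : ∀ x, ∑ y ∈ G.neighborFinset x, F x y
      = ∑ y, if G.Adj x y then F x y else 0 := by
    intro x
    rw [SimpleGraph.neighborFinset_eq_filter, Finset.sum_filter]
  have key : ∑ x, ∑ y ∈ G.neighborFinset x, F x y
      = - ∑ x, ∑ y ∈ G.neighborFinset x, F x y := by
    conv_lhs => rw [Finset.sum_congr rfl (fun x _ => hrw x), Finset.sum_comm]
    rw [Finset.sum_congr rfl (fun x _ => hrw x)]
    rw [← Finset.sum_neg_distrib]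
    apply Finset.sum_congr rfl
    intro y _
    rw [← Finset.sum_neg_distrib]
    apply Finset.sum_congr rfl
    intro x _
    by_cases hadj : G.Adj x y
    · rw [if_pos hadj, if_pos hadj.symm, hF x y hadj]
    · rw [if_neg hadj, if_neg (fun hc => hadj hc.symm), neg_zero]
  linarith


lemma exp_lin_bound (f : ℝ → ℝ) (a T₁ : ℝ) (ha : 0 < a)
    (hflb : ∀ t, T₁ ≤ t → a / 2 * Real.exp t ≤ f t) :
    ∀ α β t : ℝ, 0 ≤ α → 0 ≤ β → f t ≤ α + β * t →
      t ≤ max T₁ (max 1 (8 * (α + β) / a)) := by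
  intro α β t hα hβ hft
  by_contra hcon
  push_neg at hcon
  have ht1 : T₁ < t := lt_of_le_of_lt (le_max_left _ _) hcon
  have ht2 : (1:ℝ) < t := lt_of_le_of_lt (le_trans (le_max_left _ _) (le_max_right _ _)) hcon
  have ht3 : 8 * (α + β) / a < t :=
    lt_of_le_of_lt (le_trans (le_max_right _ _) (le_max_right _ _)) hcon
  have hlow := hflb t ht1.le
  have hexp : t / 2 + 1 ≤ Real.exp (t / 2) := Real.add_one_le_exp _
  have hexp2 : Real.exp t = Real.exp (t / 2) * Real.exp (t / 2) := by
    rw [← Real.exp_add]; ring_nf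
  have h8 : 8 * (α + β) < a * t := by
    rw [div_lt_iff₀ ha] at ht3; linarith
  have e1 : (t/2 + 1) * (t/2 + 1) ≤ Real.exp t := by
    rw [hexp2]
    exact mul_le_mul hexp hexp (by linarith) (Real.exp_pos _).le
  have e2 : a/2 * ((t/2 + 1) * (t/2 + 1)) ≤ f t :=
    le_trans (mul_le_mul_of_nonneg_left e1 (by linarith)) hlow
  have e3 : a/2 * ((t/2 + 1) * (t/2 + 1)) = a*(t*t)/8 + (a*t)/2 + a/2 := by ring
  have hat : 0 < a*t := mul_pos ha (by linarith)
  have e4 : a * (t*t) / 8 ≤ α + β * t := by linarith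
  have e5 : α + β * t ≤ (α + β) * t := by nlinarith
  have e6 : (α + β) * t < (a*t/8) * t :=
    mul_lt_mul_of_pos_right (by linarith : α + β < a*t/8) (by linarith : (0:ℝ) < t)
  have e7 : (a*t/8) * t = a*(t*t)/8 := by ring
  linarith

set_option maxHeartbeats 1000000 in
/-- Compactness with a bound depending only on `A`, the graph and
`f`: under conditions (1)-(5) on `h` and `c`, every solution of
`-Δu = h f(u) - c` satisfies `max |u| ≤ C(A, G, f)`. -/
theorem stmt2 {V : Type*} [Fintype V] [Nonempty V]
    (G : SimpleGraph V) [DecidableRel G.Adj] (hconn : G.Connected)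
    (μ : V → ℝ) (hμ : ∀ x, 0 < μ x)
    (w : V → V → ℝ) (hwsymm : ∀ x y, w x y = w y x)
    (hwpos : ∀ x y, G.Adj x y → 0 < w x y)
    (f g : ℝ → ℝ) (a : ℝ) (ha : 0 < a)
    (hf : ∀ t, f t = a * Real.exp t + g t * Real.exp t)
    (hgbdd : ∃ M : ℝ, ∀ t, |g t| ≤ M)
    (hgtop : Filter.Tendsto g Filter.atTop (nhds 0))
    (hgbot : Filter.Tendsto g Filter.atBot (nhds 0))
    (hfpos : ∀ t, 0 < f t)
    (A : ℝ) (hA : 0 < A) :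
    ∃ C : ℝ, 0 ≤ C ∧ ∀ (h : V → ℝ) (c : ℝ),
      (∀ x, |h x| + |c| ≤ A) →
      (∀ x, 0 < h x → A⁻¹ ≤ h x) →
      (0 < c → A⁻¹ ≤ c) →
      (c = 0 → ∑ x, μ x * h x ≤ -A⁻¹) →
      (c < 0 → c ≤ -A⁻¹ ∧ ∃ x, h x ≤ -A⁻¹) →
      ∀ u : V → ℝ,
        (∀ x, -((1 / μ x) * ∑ y ∈ G.neighborFinset x, w x y * (u y - u x))
            = h x * f (u x) - c) →
        ∀ x, |u x| ≤ C := by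
  classical
  obtain ⟨M, hM⟩ := hgbdd
  have hM0 : 0 ≤ M := le_trans (abs_nonneg _) (hM 0)
  set b := a + M with hbdef
  have hb : 0 < b := by simp only [hbdef]; linarith
  have hfub : ∀ t, f t ≤ b * Real.exp t := by
    intro t
    rw [hf t]
    have h1 := (abs_le.mp (hM t)).2
    have h2 := Real.exp_pos t
    simp only [hbdef]
    nlinarith
  -- upper threshold for f lower bound
  obtain ⟨T₁, hT₁0, hflb⟩ : ∃ T : ℝ, 0 ≤ T ∧ ∀ t, T ≤ t → a/2 * Real.exp t ≤ f t := by
    have h1 : ∀ᶠ t in Filter.atTop, ‖g t‖ < a/2 :=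
      NormedAddCommGroup.tendsto_nhds_zero.mp hgtop (a/2) (by positivity)
    obtain ⟨T0, hT0⟩ := Filter.eventually_atTop.mp h1
    refine ⟨max T0 0, le_max_right _ _, ?_⟩
    intro t ht
    have h2 := hT0 t (le_trans (le_max_left _ _) ht)
    rw [Real.norm_eq_abs] at h2
    have h3 := (abs_lt.mp h2).1
    rw [hf t]
    nlinarith [Real.exp_pos t]
  -- graph constants
  have hne : (Finset.univ : Finset V).Nonempty := Finset.univ_nonempty
  obtain ⟨xμ, -, hxμ⟩ := Finset.exists_min_image Finset.univ μ hne
  set μ0 := μ xμ with hμ0def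
  have hμ0pos : 0 < μ0 := hμ xμ
  have hμ0le : ∀ x, μ0 ≤ μ x := fun x => hxμ x (Finset.mem_univ x)
  obtain ⟨xμ1, -, hxμ1⟩ := Finset.exists_max_image Finset.univ μ hne
  set μ1 := μ xμ1 with hμ1def
  have hμ1pos : 0 < μ1 := hμ xμ1
  have hμ1le : ∀ x, μ x ≤ μ1 := fun x => hxμ1 x (Finset.mem_univ x)
  obtain ⟨xW, -, hxW⟩ := Finset.exists_max_image Finset.univ
    (fun x => ∑ y ∈ G.neighborFinset x, w x y) hne
  set W1 := ∑ y ∈ G.neighborFinset xW, w xW y with hW1def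
  have hW1 : ∀ x, ∑ y ∈ G.neighborFinset x, w x y ≤ W1 := fun x => hxW x (Finset.mem_univ x)
  have hW1nn : 0 ≤ W1 := by
    have : (0:ℝ) ≤ ∑ y ∈ G.neighborFinset xW, w xW y := by
      apply Finset.sum_nonneg
      intro y hy
      exact (hwpos xW y ((SimpleGraph.mem_neighborFinset _ _ _).mp hy)).le
    simpa [hW1def] using this
  set μV := ∑ x, μ x with hμVdef
  have hμV : 0 < μV := Finset.sum_pos (fun x _ => hμ x) hne
  obtain ⟨w0, hw0pos, hwlb⟩ : ∃ w0 : ℝ, 0 < w0 ∧ ∀ x y, G.Adj x y → w0 ≤ w x y := by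
    by_cases hE : ((Finset.univ ×ˢ Finset.univ).filter (fun p : V × V => G.Adj p.1 p.2)).Nonempty
    · refine ⟨((Finset.univ ×ˢ Finset.univ).filter
          (fun p : V × V => G.Adj p.1 p.2)).inf' hE (fun p => w p.1 p.2), ?_, ?_⟩
      · exact (Finset.lt_inf'_iff hE).mpr
          (fun p hp => hwpos p.1 p.2 (Finset.mem_filter.mp hp).2)
      · intro x y hxy
        have hmem : ((x,y) : V × V) ∈ (Finset.univ ×ˢ Finset.univ).filter
            (fun p : V × V => G.Adj p.1 p.2) := by
          simp only [Finset.mem_filter, Finset.mem_product, Finset.mem_univ, true_and]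
          exact hxy
        exact Finset.inf'_le (fun p : V × V => w p.1 p.2) hmem
    · refine ⟨1, one_pos, fun x y hxy => ?_⟩
      exfalso
      apply hE
      refine ⟨(x,y), ?_⟩
      simp only [Finset.mem_filter, Finset.mem_product, Finset.mem_univ, true_and]
      exact hxy
  set ρ := (1 + W1) / w0 + 1 with hρdef
  have hρ1 : (1:ℝ) ≤ ρ := by
    have : 0 ≤ (1 + W1) / w0 := by positivity
    simp only [hρdef]; linarith
  set n := Fintype.card V with hndef
  set Γ := ρ ^ n with hΓdef
  have hΓ1 : (1:ℝ) ≤ Γ := one_le_pow₀ hρ1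
  have hΓ0 : (0:ℝ) ≤ Γ := by linarith
  -- bottom threshold
  set ε' := a / (4 * A ^ 2 * μV) with hε'def
  have hε' : 0 < ε' := by simp only [hε'def]; positivity
  obtain ⟨T₂, hT₂⟩ : ∃ T : ℝ, ∀ t, t ≤ T → |g t| ≤ ε' := by
    have h1 : ∀ᶠ t in Filter.atBot, ‖g t‖ < ε' :=
      NormedAddCommGroup.tendsto_nhds_zero.mp hgbot ε' hε'
    obtain ⟨T0, hT0⟩ := Filter.eventually_atBot.mp h1
    exact ⟨T0, fun t ht => le_of_lt (by rw [← Real.norm_eq_abs]; exact hT0 t ht)⟩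
  set δ' := 1 / (2 * A ^ 2 * μV) with hδ'def
  have hδ' : 0 < δ' := by simp only [hδ'def]; positivity
  set m₂ := Real.log (1 / (A ^ 2 * b)) with hm₂def
  set m₀ := min T₂ (Real.log (δ' / (Γ * μ1 * A * b))) with hm₀def
  set mstar := min m₂ m₀ with hmstardef
  set β' := μ1 * A * (1 + b) with hβ'def
  have hβ'pos : 0 < β' := by simp only [hβ'def]; positivity
  set Λ := Γ * β' + 1 with hΛdef
  have hΛpos : 0 < Λ := by
    have : 0 ≤ Γ * β' := by positivity
    simp only [hΛdef]; linarith
  set L := max Λ (Λ - mstar) with hLdef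
  have hL0 : 0 ≤ L := le_trans hΛpos.le (le_max_left _ _)
  have hLΛ : Λ ≤ L := le_max_left _ _
  set α₁ := A * A + (A * W1 / μ0) * L with hα₁def
  have hα₁0 : 0 ≤ α₁ := by simp only [hα₁def]; positivity
  set β₁ := A * W1 / μ0 with hβ₁def
  have hβ₁0 : 0 ≤ β₁ := by simp only [hβ₁def]; positivity
  have hH1f : ∀ α β t : ℝ, 0 ≤ α → 0 ≤ β → f t ≤ α + β * t →
      t ≤ max T₁ (max 1 (8 * (α + β) / a)) := exp_lin_bound f a T₁ ha hflb
  set CB := max T₁ (max 1 (8 * (α₁ + β₁) / a)) with hCBdef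
  set CC := max T₁ (max 1 (8 * (A * A * μV / μ0 + 0) / a)) with hCCdef
  set Cup := max CB (max (CB + μ1 * A * Γ) (CC + μ1 * A * Γ)) with hCupdef
  refine ⟨max (max Cup L) 0, le_max_right _ _, ?_⟩
  intro h c h1 h2 h3 h4 h5 u hu
  -- basic facts about h and c
  have habs : ∀ x, |h x| ≤ A := fun x => by
    have := h1 x; have := abs_nonneg c; linarith
  have hcabs : |c| ≤ A := by
    obtain ⟨x⟩ := ‹Nonempty V›
    have := h1 x; have := abs_nonneg (h x); linarith
  have hcA : c ≤ A := le_trans (le_abs_self c) hcabs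
  have hcA' : -A ≤ c := by have := neg_abs_le c; linarith
  have hhA : ∀ x, h x ≤ A := fun x => le_trans (le_abs_self _) (habs x)
  have hhA' : ∀ x, -A ≤ h x := fun x => by have := neg_abs_le (h x); linarith [habs x]
  -- flux identity
  have hflux : ∀ x, ∑ y ∈ G.neighborFinset x, w x y * (u x - u y)
      = μ x * (h x * f (u x) - c) := by
    intro x
    have h0 := hu x
    have hμx : μ x ≠ 0 := (hμ x).ne'
    have e1 : ∑ y ∈ G.neighborFinset x, w x y * (u x - u y)
        = -∑ y ∈ G.neighborFinset x, w x y * (u y - u x) := by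
      rw [← Finset.sum_neg_distrib]
      exact Finset.sum_congr rfl (fun y _ => by ring)
    rw [e1]
    have h2' : μ x * (-((1 / μ x) * ∑ y ∈ G.neighborFinset x, w x y * (u y - u x)))
        = μ x * (h x * f (u x) - c) := by rw [h0]
    have h3' : μ x * (-((1 / μ x) * ∑ y ∈ G.neighborFinset x, w x y * (u y - u x)))
        = -∑ y ∈ G.neighborFinset x, w x y * (u y - u x) := by
      field_simp
    linarith
  have hident : ∑ x, μ x * (h x * f (u x)) = c * μV := by
    have hzero : ∑ x, ∑ y ∈ G.neighborFinset x, w x y * (u x - u y) = 0 :=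
      sum_nbr_antisymm G _ (fun x y hxy => by rw [hwsymm x y]; ring)
    have hsum : ∑ x, μ x * (h x * f (u x) - c) = 0 := by
      rw [← hzero]
      exact Finset.sum_congr rfl (fun x _ => (hflux x).symm)
    have hexpand : ∑ x, μ x * (h x * f (u x) - c)
        = (∑ x, μ x * (h x * f (u x))) - c * μV := by
      rw [hμVdef, Finset.mul_sum, ← Finset.sum_sub_distrib]
      exact Finset.sum_congr rfl (fun x _ => by ring)
    rw [hexpand] at hsum
    linarith
  -- extrema
  obtain ⟨x0, -, hx0⟩ := Finset.exists_max_image Finset.univ u hne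
  set m := u x0 with hmdef
  have hmax : ∀ v, u v ≤ m := fun v => hx0 v (Finset.mem_univ v)
  obtain ⟨x1, -, hx1⟩ := Finset.exists_min_image Finset.univ u hne
  set ℓ := u x1 with hℓdef
  have hmin : ∀ v, ℓ ≤ u v := fun v => hx1 v (Finset.mem_univ v)
  -- lower bound on the maximum
  have hmlb : mstar ≤ m := by
    by_cases hc0 : c = 0
    · by_contra hcon
      push_neg at hcon
      have hm1 : m ≤ T₂ := by
        have e := le_trans (min_le_right m₂ m₀) (min_le_left T₂ _)
        linarith only [hcon, e]
      have hm2 : m ≤ Real.log (δ' / (Γ * μ1 * A * b)) := by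
        have e := le_trans (min_le_right m₂ m₀) (min_le_right T₂ _)
        linarith only [hcon, e]
      set βP := μ1 * (A * (b * Real.exp m)) with hβPdef
      have hβPnn : 0 ≤ βP :=
        (mul_pos hμ1pos (mul_pos hA (mul_pos hb (Real.exp_pos m)))).le
      have hΩP : ∀ x ∈ (Set.univ : Set V),
          ∑ y ∈ G.neighborFinset x, w x y * (u x - u y) ≤ βP := by
        intro x _
        rw [hflux x, hc0]
        have g3 := hfpos (u x)
        have g4 : h x * f (u x) ≤ A * f (u x) := mul_le_mul_of_nonneg_right (hhA x) g3.le
        have g5 : A * f (u x) ≤ A * (b * Real.exp (u x)) :=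
          mul_le_mul_of_nonneg_left (hfub (u x)) hA.le
        have g6 : Real.exp (u x) ≤ Real.exp m := Real.exp_le_exp.mpr (hmax x)
        have g7 : A * (b * Real.exp (u x)) ≤ A * (b * Real.exp m) :=
          mul_le_mul_of_nonneg_left (mul_le_mul_of_nonneg_left g6 hb.le) hA.le
        have g8 : h x * f (u x) - 0 ≤ A * (b * Real.exp m) := by linarith only [g4, g5, g7]
        rcases le_or_gt (h x * f (u x) - 0) 0 with hc' | hc'
        · have e3 := mul_nonpos_of_nonneg_of_nonpos (hμ x).le hc'
          linarith only [e3, hβPnn]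
        · have e3 := mul_le_mul_of_nonneg_right (hμ1le x) hc'.le
          have e4 := mul_le_mul_of_nonneg_left g8 hμ1pos.le
          rw [hβPdef]
          linarith only [e3, e4]
      obtain ⟨v, hvd, hvb⟩ := reach_key G hconn w u W1 w0 ρ hw0pos hwlb hwpos hW1 hW1nn
        hρdef m hmax Set.univ βP hβPnn hΩP x0 x1 le_rfl
      have hvx : v = x1 := by
        rcases hvd with hv | hv
        · exact absurd (Set.mem_univ v) hv
        · exact hv
      rw [hvx] at hvb
      have hPb : ∀ x, m - u x ≤ βP * Γ := by
        intro x
        have e : βP * ρ ^ (Fintype.card V) = βP * Γ := by rw [hΓdef, hndef]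
        rw [e] at hvb
        have := hmin x
        linarith only [hvb, this]
      have hΓpos : 0 < Γ := by linarith only [hΓ1]
      have hPδ : βP * Γ ≤ δ' := by
        have hden : 0 < Γ * μ1 * A * b := mul_pos (mul_pos (mul_pos hΓpos hμ1pos) hA) hb
        have hqpos : 0 < δ' / (Γ * μ1 * A * b) := div_pos hδ' hden
        have hexpm : Real.exp m ≤ δ' / (Γ * μ1 * A * b) := by
          have e := Real.exp_le_exp.mpr hm2
          rwa [Real.exp_log hqpos] at e
        have e1 := mul_le_mul_of_nonneg_left hexpm hden.le
        have heq : (Γ * μ1 * A * b) * (δ' / (Γ * μ1 * A * b)) = δ' := by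
          field_simp
        rw [heq] at e1
        rw [hβPdef]
        linarith only [e1]
      set q := fun x => Real.exp (u x - m) with hqdef
      have hq1 : ∀ x, q x ≤ 1 := fun x => Real.exp_le_one_iff.mpr (by linarith only [hmax x])
      have hq0 : ∀ x, 0 < q x := fun x => Real.exp_pos _
      have hq2 : ∀ x, 1 - q x ≤ m - u x := by
        intro x
        have e := Real.add_one_le_exp (u x - m)
        simp only [hqdef]
        linarith only [e]
      have hqe : ∀ x, Real.exp m * q x = Real.exp (u x) := by
        intro x
        simp only [hqdef]
        rw [← Real.exp_add]
        congr 1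
        ring
      have hsum0 : ∑ x, μ x * h x * (q x * (a + g (u x))) = 0 := by
        have he : ∀ x ∈ Finset.univ, μ x * (h x * f (u x))
            = Real.exp m * (μ x * h x * (q x * (a + g (u x)))) := by
          intro x _
          rw [hf (u x), ← hqe x]
          ring
        have e1 : ∑ x, μ x * (h x * f (u x))
            = Real.exp m * ∑ x, μ x * h x * (q x * (a + g (u x))) := by
          rw [Finset.mul_sum]
          exact Finset.sum_congr rfl he
        rw [hident, hc0, zero_mul] at e1
        exact (mul_eq_zero.mp e1.symm).resolve_left (Real.exp_ne_zero m)
      have hS1 : ∑ x, μ x * h x * q x ≤ -(1/(2*A)) := by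
        have hper : ∀ x ∈ Finset.univ, μ x * h x * q x ≤ μ x * h x + μ x * (A * δ') := by
          intro x _
          have e1 := hq2 x
          have e2 := hq1 x
          have e3 := hPb x
          have e4 : 1 - q x ≤ δ' := by linarith only [e1, e3, hPδ]
          have e6 := mul_nonpos_of_nonneg_of_nonpos
            (by linarith only [hhA' x] : 0 ≤ h x + A) (by linarith only [e2] : q x - 1 ≤ 0)
          have e5 : h x * (q x - 1) ≤ A * (1 - q x) := by linarith only [e6]
          have e7 : h x * (q x - 1) ≤ A * δ' := by
            have e8 : A * (1 - q x) ≤ A * δ' := mul_le_mul_of_nonneg_left e4 hA.le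
            linarith only [e5, e8]
          have e9 := mul_le_mul_of_nonneg_left e7 (hμ x).le
          linarith only [e9]
        have hsum := Finset.sum_le_sum hper
        have hsplit : ∑ x, (μ x * h x + μ x * (A * δ'))
            = (∑ x, μ x * h x) + (A * δ') * μV := by
          rw [Finset.sum_add_distrib]
          congr 1
          rw [hμVdef, Finset.mul_sum]
          exact Finset.sum_congr rfl (fun x _ => by ring)
        have h40 := h4 hc0
        have hδval : (A * δ') * μV = 1/(2*A) := by
          rw [hδ'def]
          field_simp
        have hAA : A⁻¹ = 2 * (1/(2*A)) := by
          field_simp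
        rw [hsplit] at hsum
        rw [hAA] at h40
        linarith only [hsum, h40, hδval]
      have hS2 : |∑ x, μ x * h x * (q x * g (u x))| ≤ a/(4*A) := by
        have e1 : |∑ x, μ x * h x * (q x * g (u x))| ≤ ∑ x, |μ x * h x * (q x * g (u x))| :=
          Finset.abs_sum_le_sum_abs _ _
        have e2 : ∀ x ∈ Finset.univ, |μ x * h x * (q x * g (u x))| ≤ μ x * (A * ε') := by
          intro x _
          have hgb : |g (u x)| ≤ ε' := hT₂ (u x) (by linarith only [hmax x, hm1])
          rw [abs_mul, abs_mul, abs_of_pos (hμ x), abs_mul, abs_of_pos (hq0 x)]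
          have e3 : q x * |g (u x)| ≤ 1 * ε' :=
            mul_le_mul (hq1 x) hgb (abs_nonneg _) zero_le_one
          have e4 : μ x * |h x| ≤ μ x * A := mul_le_mul_of_nonneg_left (habs x) (hμ x).le
          have e5 : μ x * |h x| * (q x * |g (u x)|) ≤ (μ x * A) * (1 * ε') := by
            exact mul_le_mul e4 e3 (mul_nonneg (hq0 x).le (abs_nonneg _))
              (mul_nonneg (hμ x).le hA.le)
          calc μ x * |h x| * (q x * |g (u x)|) ≤ (μ x * A) * (1 * ε') := e5
            _ = μ x * (A * ε') := by ring
        have e5 := Finset.sum_le_sum e2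
        have e6 : ∑ x, μ x * (A * ε') = (A * ε') * μV := by
          rw [hμVdef, Finset.mul_sum]
          exact Finset.sum_congr rfl (fun x _ => by ring)
        have e7 : (A * ε') * μV = a/(4*A) := by
          rw [hε'def]
          field_simp
        linarith only [e1, e5, e6, e7]
      have hsplit2 : a * (∑ x, μ x * h x * q x)
          + (∑ x, μ x * h x * (q x * g (u x))) = 0 := by
        rw [← hsum0, Finset.mul_sum, ← Finset.sum_add_distrib]
        exact Finset.sum_congr rfl (fun x _ => by ring)
      have hc1 : a * (∑ x, μ x * h x * q x) ≤ a * (-(1/(2*A))) :=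
        mul_le_mul_of_nonneg_left hS1 ha.le
      have hc2 : ∑ x, μ x * h x * (q x * g (u x)) ≤ a/(4*A) := (abs_le.mp hS2).2
      have hfin : 0 < a/(4*A) := by positivity
      have hval : a * (-(1/(2*A))) = -(2*(a/(4*A))) := by ring
      linarith only [hsplit2, hc1, hc2, hfin, hval]
    · have hcc : A⁻¹ ≤ |c| := by
        rcases lt_trichotomy c 0 with hlt | heq | hgt
        · have e := (h5 hlt).1
          rw [abs_of_neg hlt]
          linarith only [e]
        · exact absurd heq hc0
        · rw [abs_of_pos hgt]
          exact h3 hgt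
      have hb1 : |c| * μV ≤ (A * (b * Real.exp m)) * μV := by
        have e1 : |c| * μV = |c * μV| := by rw [abs_mul, abs_of_pos hμV]
        rw [e1, ← hident]
        calc |∑ x, μ x * (h x * f (u x))| ≤ ∑ x, |μ x * (h x * f (u x))| :=
            Finset.abs_sum_le_sum_abs _ _
          _ ≤ ∑ x, μ x * (A * (b * Real.exp m)) := by
              apply Finset.sum_le_sum
              intro x _
              rw [abs_mul, abs_of_pos (hμ x), abs_mul]
              have e3 : |f (u x)| = f (u x) := abs_of_pos (hfpos _)
              have e2 : |h x| * |f (u x)| ≤ A * (b * Real.exp m) := by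
                rw [e3]
                have g6 : Real.exp (u x) ≤ Real.exp m := Real.exp_le_exp.mpr (hmax x)
                have g7 : f (u x) ≤ b * Real.exp m := by
                  have g8 := mul_le_mul_of_nonneg_left g6 hb.le
                  linarith only [hfub (u x), g8]
                exact mul_le_mul (habs x) g7 (hfpos _).le hA.le
              exact mul_le_mul_of_nonneg_left e2 (hμ x).le
          _ = (A * (b * Real.exp m)) * μV := by
              rw [hμVdef, Finset.mul_sum]
              exact Finset.sum_congr rfl (fun x _ => by ring)
      have hexpm : 1/(A^2*b) ≤ Real.exp m := by
        have e1 : A⁻¹ ≤ A * (b * Real.exp m) :=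
          le_trans hcc (le_of_mul_le_mul_right hb1 hμV)
        rw [div_le_iff₀ (mul_pos (pow_pos hA 2) hb)]
        have e2 := mul_le_mul_of_nonneg_left e1 hA.le
        have e3 : A * A⁻¹ = 1 := mul_inv_cancel₀ hA.ne'
        calc (1:ℝ) = A * A⁻¹ := e3.symm
          _ ≤ A * (A * (b * Real.exp m)) := e2
          _ = Real.exp m * (A ^ 2 * b) := by ring
      have e4 : m₂ ≤ m := by
        rw [hm₂def]
        exact (Real.log_le_iff_le_exp (div_pos one_pos (mul_pos (pow_pos hA 2) hb))).mpr hexpm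
      exact le_trans (min_le_left _ _) e4
  -- lower bound on the minimum
  have hllb : -L ≤ ℓ := by
    rcases le_or_gt (-Λ) ℓ with hΛℓ | hΛℓ
    · linarith only [hΛℓ, hLΛ]
    · have hΩ'b : ∀ x ∈ ({x | u x ≤ ℓ + Λ} : Set V),
          ∑ y ∈ G.neighborFinset x, w x y * (-u x - -u y) ≤ β' := by
        intro x hx
        have hx' : u x ≤ ℓ + Λ := hx
        have hux0 : u x ≤ 0 := by linarith only [hx', hΛℓ]
        have hexp1 : Real.exp (u x) ≤ 1 := Real.exp_le_one_iff.mpr hux0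
        have e0 : ∑ y ∈ G.neighborFinset x, w x y * (-u x - -u y)
            = -(∑ y ∈ G.neighborFinset x, w x y * (u x - u y)) := by
          rw [← Finset.sum_neg_distrib]
          exact Finset.sum_congr rfl (fun y _ => by ring)
        rw [e0, hflux x]
        have e1 : -(h x * f (u x)) ≤ A * b := by
          have g1 : -(h x) ≤ A := by linarith only [hhA' x]
          have g3 := hfpos (u x)
          have g4 : -(h x) * f (u x) ≤ A * f (u x) := mul_le_mul_of_nonneg_right g1 g3.le
          have g5 : A * f (u x) ≤ A * (b * Real.exp (u x)) :=
            mul_le_mul_of_nonneg_left (hfub (u x)) hA.le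
          have g6 : A * (b * Real.exp (u x)) ≤ A * (b * 1) :=
            mul_le_mul_of_nonneg_left (mul_le_mul_of_nonneg_left hexp1 hb.le) hA.le
          linarith only [g4, g5, g6]
        have e2 : c - h x * f (u x) ≤ A + A * b := by linarith only [e1, hcA]
        rcases le_or_gt (c - h x * f (u x)) 0 with hc' | hc'
        · have e3 := mul_nonpos_of_nonneg_of_nonpos (hμ x).le hc'
          linarith only [e3, hβ'pos]
        · have e3 := mul_le_mul_of_nonneg_right (hμ1le x) hc'.le
          have e4 := mul_le_mul_of_nonneg_left e2 hμ1pos.le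
          rw [hβ'def]
          linarith only [e3, e4]
      obtain ⟨v, hvd, hvb⟩ := reach_key G hconn w (fun v => -u v) W1 w0 ρ hw0pos hwlb hwpos
        hW1 hW1nn hρdef (-ℓ) (fun v => by simp only [neg_le_neg_iff]; exact hmin v)
        ({x | u x ≤ ℓ + Λ} : Set V) β' hβ'pos.le hΩ'b x1 x0 le_rfl
      have hvb2 : -ℓ - β' * ρ ^ (Fintype.card V) ≤ -u v := hvb
      have hvb' : u v ≤ ℓ + β' * Γ := by
        have e : β' * ρ ^ (Fintype.card V) = β' * Γ := by rw [hΓdef, hndef]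
        rw [e] at hvb2
        linarith only [hvb2]
      have e2 : β' * Γ ≤ Λ := by rw [hΛdef]; linarith only []
      have hmem : v ∈ ({x | u x ≤ ℓ + Λ} : Set V) := by
        have : u v ≤ ℓ + Λ := by linarith only [hvb', e2]
        exact this
      have hvx0 : v = x0 := by
        rcases hvd with hv | hv
        · exact absurd hmem hv
        · exact hv
      rw [hvx0] at hvb'
      have e1 : Λ - mstar ≤ L := le_max_right _ _
      linarith only [hvb', hmlb, e1, e2]
  -- bound at vertices with positive h
  have hposb : ∀ v, A⁻¹ ≤ h v → u v ≤ CB := by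
    intro v hv
    have hfl : ∑ y ∈ G.neighborFinset v, w v y * (u v - u y) ≤ W1 * (u v + L) := by
      have hterm : ∀ y ∈ G.neighborFinset v, w v y * (u v - u y) ≤ w v y * (u v + L) := by
        intro y hy
        have hadj := (SimpleGraph.mem_neighborFinset _ _ _).mp hy
        have hwp := (hwpos v y hadj).le
        have hz : u v - u y ≤ u v + L := by have := hmin y; linarith
        exact mul_le_mul_of_nonneg_left hz hwp
      calc ∑ y ∈ G.neighborFinset v, w v y * (u v - u y)
          ≤ ∑ y ∈ G.neighborFinset v, w v y * (u v + L) := Finset.sum_le_sum hterm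
        _ = (∑ y ∈ G.neighborFinset v, w v y) * (u v + L) := by rw [Finset.sum_mul]
        _ ≤ W1 * (u v + L) := by
            have huvL : 0 ≤ u v + L := by have := hmin v; linarith
            exact mul_le_mul_of_nonneg_right (hW1 v) huvL
    rw [hflux v] at hfl
    have hfv := hfpos (u v)
    have hAi : 0 < A⁻¹ := inv_pos.mpr hA
    have hRnn : 0 ≤ W1 * (u v + L) := mul_nonneg hW1nn (by have := hmin v; linarith)
    have hle1 : μ0 * (h v * f (u v) - c) ≤ W1 * (u v + L) := by
      rcases le_or_gt (h v * f (u v) - c) 0 with hc' | hc'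
      · have e := mul_nonpos_of_nonneg_of_nonpos hμ0pos.le hc'
        linarith only [e, hRnn]
      · have e := mul_le_mul_of_nonneg_right (hμ0le v) hc'.le
        linarith only [e, hfl]
    have hle2 : A⁻¹ * f (u v) ≤ h v * f (u v) := mul_le_mul_of_nonneg_right hv hfv.le
    have hle3 : μ0 * (A⁻¹ * f (u v)) ≤ μ0 * c + W1 * (u v + L) := by
      have e := mul_le_mul_of_nonneg_left
        (by linarith only [hle2] : A⁻¹ * f (u v) - c ≤ h v * f (u v) - c) hμ0pos.le
      linarith only [e, hle1]
    have hle4 : f (u v) ≤ α₁ + β₁ * u v := by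
      have hstep := mul_le_mul_of_nonneg_left hle3 hA.le
      have heq : A * (μ0 * (A⁻¹ * f (u v))) = μ0 * f (u v) := by
        field_simp
      rw [heq] at hstep
      have h6' : μ0 * f (u v) ≤ μ0 * (A*A) + A * W1 * u v + A * W1 * L := by
        have hac : μ0 * (A * c) ≤ μ0 * (A * A) :=
          mul_le_mul_of_nonneg_left (mul_le_mul_of_nonneg_left hcA hA.le) hμ0pos.le
        linarith only [hstep, hac]
      have h7' : f (u v) ≤ (μ0 * (A*A) + A * W1 * u v + A * W1 * L) / μ0 := by
        rw [le_div_iff₀ hμ0pos]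
        linarith only [h6']
      have h8' : (μ0 * (A*A) + A * W1 * u v + A * W1 * L) / μ0 = α₁ + β₁ * u v := by
        rw [hα₁def, hβ₁def]
        field_simp
        ring
      linarith
    have := hH1f α₁ β₁ (u v) hα₁0 hβ₁0 hle4
    rw [hCBdef]
    exact this
  -- upper bound on the maximum
  have hmub : m ≤ Cup := by
    by_cases hpos : ∃ z, 0 < h z
    · obtain ⟨z, hz⟩ := hpos
      by_cases hx0p : 0 < h x0
      · have h6 := hposb x0 (h2 x0 hx0p)
        have e1 : CB ≤ Cup := by rw [hCupdef]; exact le_max_left _ _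
        linarith only [h6, e1]
      · have hΩb : ∀ x ∈ ({x | h x ≤ 0} : Set V),
            ∑ y ∈ G.neighborFinset x, w x y * (u x - u y) ≤ μ1 * A := by
          intro x hx
          have hx' : h x ≤ 0 := hx
          rw [hflux x]
          have e1 : h x * f (u x) ≤ 0 :=
            mul_nonpos_of_nonpos_of_nonneg hx' (hfpos (u x)).le
          have e2 : h x * f (u x) - c ≤ A := by linarith only [e1, hcA']
          rcases le_or_gt (h x * f (u x) - c) 0 with hc' | hc'
          · have e3 := mul_nonpos_of_nonneg_of_nonpos (hμ x).le hc'
            have e4 : 0 ≤ μ1 * A := (mul_pos hμ1pos hA).le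
            linarith only [e3, e4]
          · have e3 := mul_le_mul_of_nonneg_right (hμ1le x) hc'.le
            have e4 := mul_le_mul_of_nonneg_left e2 hμ1pos.le
            linarith only [e3, e4]
        obtain ⟨v, hvd, hvb⟩ := reach_key G hconn w u W1 w0 ρ hw0pos hwlb hwpos hW1 hW1nn
          hρdef m hmax ({x | h x ≤ 0} : Set V) (μ1 * A) (mul_pos hμ1pos hA).le hΩb x0 z le_rfl
        have hvpos : 0 < h v := by
          rcases hvd with hv | hv
          · exact lt_of_not_ge hv
          · rw [hv]; exact hz
        have h6 := hposb v (h2 v hvpos)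
        have e1 : CB + μ1 * A * Γ ≤ Cup := by
          rw [hCupdef]; exact le_trans (le_max_left _ _) (le_max_right _ _)
        have e2 : m - μ1 * A * Γ ≤ u v := by
          rw [hΓdef, hndef]; exact hvb
        linarith only [h6, e1, e2]
    · push_neg at hpos
      have hcle : c ≤ 0 := by
        have e := hflux x0
        have hfl0 : 0 ≤ ∑ y ∈ G.neighborFinset x0, w x0 y * (u x0 - u y) := by
          apply Finset.sum_nonneg
          intro y hy
          have hadj := (SimpleGraph.mem_neighborFinset _ _ _).mp hy
          exact mul_nonneg (hwpos x0 y hadj).le (by have := hmax y; linarith only [this])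
        rw [e] at hfl0
        have e1 : h x0 * f (u x0) ≤ 0 :=
          mul_nonpos_of_nonpos_of_nonneg (hpos x0) (hfpos _).le
        by_contra hcpos
        push_neg at hcpos
        have e2 : h x0 * f (u x0) - c < 0 := by linarith only [e1, hcpos]
        have e3 := mul_neg_of_pos_of_neg (hμ x0) e2
        linarith only [hfl0, e3]
      rcases hcle.lt_or_eq with hcneg | hc0
      · obtain ⟨hc5, x₂, hx₂⟩ := h5 hcneg
        have hterm : c * μV ≤ μ x₂ * (h x₂ * f (u x₂)) := by
          have hsplit : (∑ x ∈ Finset.univ.erase x₂, μ x * (h x * f (u x)))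
              + μ x₂ * (h x₂ * f (u x₂)) = ∑ x, μ x * (h x * f (u x)) :=
            Finset.sum_erase_add _ _ (Finset.mem_univ x₂)
          have hrest : ∑ x ∈ Finset.univ.erase x₂, μ x * (h x * f (u x)) ≤ 0 := by
            apply Finset.sum_nonpos
            intro x hx
            exact mul_nonpos_of_nonneg_of_nonpos (hμ x).le
              (mul_nonpos_of_nonpos_of_nonneg (hpos x) (hfpos _).le)
          linarith only [hsplit, hrest, hident]
        have hf2 : f (u x₂) ≤ A * A * μV / μ0 := by
          have hfv := hfpos (u x₂)
          have hAi : 0 < A⁻¹ := inv_pos.mpr hA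
          have e1 : h x₂ * f (u x₂) ≤ -A⁻¹ * f (u x₂) :=
            mul_le_mul_of_nonneg_right hx₂ hfv.le
          have e2 : h x₂ * f (u x₂) ≤ 0 :=
            le_trans e1 (mul_nonpos_of_nonpos_of_nonneg (by linarith only [hAi]) hfv.le)
          have e3 : μ x₂ * (h x₂ * f (u x₂)) ≤ μ0 * (h x₂ * f (u x₂)) := by
            have := mul_le_mul_of_nonpos_right (hμ0le x₂) e2
            linarith only [this]
          have e4 : μ0 * (h x₂ * f (u x₂)) ≤ μ0 * (-A⁻¹ * f (u x₂)) :=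
            mul_le_mul_of_nonneg_left e1 hμ0pos.le
          have e6 : -c * μV ≤ A * μV :=
            mul_le_mul_of_nonneg_right (by linarith only [hcA']) hμV.le
          have e5 : μ0 * (A⁻¹ * f (u x₂)) ≤ A * μV := by
            linarith only [hterm, e3, e4, e6]
          have e7 := mul_le_mul_of_nonneg_left e5 hA.le
          have heq : A * (μ0 * (A⁻¹ * f (u x₂))) = μ0 * f (u x₂) := by field_simp
          rw [heq] at e7
          rw [le_div_iff₀ hμ0pos]
          linarith only [e7]
        have hux2 : u x₂ ≤ CC := by
          have h7 := hH1f (A * A * μV / μ0 + 0) 0 (u x₂)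
            (by positivity) le_rfl (by linarith only [hf2])
          rw [hCCdef]
          convert h7 using 4
          ring
        have hΩu : ∀ x ∈ (Set.univ : Set V),
            ∑ y ∈ G.neighborFinset x, w x y * (u x - u y) ≤ μ1 * A := by
          intro x _
          rw [hflux x]
          have e1 : h x * f (u x) ≤ 0 :=
            mul_nonpos_of_nonpos_of_nonneg (hpos x) (hfpos (u x)).le
          have e2 : h x * f (u x) - c ≤ A := by linarith only [e1, hcA']
          rcases le_or_gt (h x * f (u x) - c) 0 with hc' | hc'
          · have e3 := mul_nonpos_of_nonneg_of_nonpos (hμ x).le hc'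
            have e4 : 0 ≤ μ1 * A := (mul_pos hμ1pos hA).le
            linarith only [e3, e4]
          · have e3 := mul_le_mul_of_nonneg_right (hμ1le x) hc'.le
            have e4 := mul_le_mul_of_nonneg_left e2 hμ1pos.le
            linarith only [e3, e4]
        obtain ⟨v, hvd, hvb⟩ := reach_key G hconn w u W1 w0 ρ hw0pos hwlb hwpos hW1 hW1nn
          hρdef m hmax Set.univ (μ1 * A) (mul_pos hμ1pos hA).le hΩu x0 x₂ le_rfl
        have hvx : v = x₂ := by
          rcases hvd with hv | hv
          · exact absurd (Set.mem_univ v) hv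
          · exact hv
        rw [hvx] at hvb
        have e1 : CC + μ1 * A * Γ ≤ Cup := by
          rw [hCupdef]; exact le_trans (le_max_right _ _) (le_max_right _ _)
        have e2 : m - μ1 * A * Γ ≤ u x₂ := by
          rw [hΓdef, hndef]; exact hvb
        linarith only [hux2, e1, e2]
      · exfalso
        have h40 := h4 hc0
        have hsum0 : ∑ x, μ x * (h x * f (u x)) = 0 := by
          rw [hident, hc0, zero_mul]
        have hterms : ∀ x ∈ Finset.univ, μ x * (h x * f (u x)) ≤ 0 := fun x _ =>
          mul_nonpos_of_nonneg_of_nonpos (hμ x).le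
            (mul_nonpos_of_nonpos_of_nonneg (hpos x) (hfpos _).le)
        have hzero := (Finset.sum_eq_zero_iff_of_nonpos hterms).mp hsum0
        have hh0 : ∀ x, h x = 0 := by
          intro x
          have e := hzero x (Finset.mem_univ x)
          rcases mul_eq_zero.mp e with e1 | e1
          · exact absurd e1 (hμ x).ne'
          · rcases mul_eq_zero.mp e1 with e2 | e2
            · exact e2
            · exact absurd e2 (hfpos _).ne'
        have hs : ∑ x, μ x * h x = 0 :=
          Finset.sum_eq_zero (fun x _ => by rw [hh0 x, mul_zero])
        rw [hs] at h40
        have hAi : 0 < A⁻¹ := inv_pos.mpr hA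
        linarith only [h40, hAi]
  intro x
  rw [abs_le]
  constructor
  · have e1 : L ≤ max (max Cup L) 0 := le_trans (le_max_right _ _) (le_max_left _ _)
    have := hmin x
    linarith
  · have e1 : Cup ≤ max (max Cup L) 0 := le_trans (le_max_left _ _) (le_max_left _ _)
    have := hmax x
    linarith
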